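/- Let γ be a closed, simple, strictly convex C² curve of constant Minkowski width d in a normed plane, parametrized over [0, 2λ(S)] so that γ'(u) = ρ(u)φ'(u), where φ is the double-sector-area parametrization of the unit circle S. Then ρ(u) + ρ(u + λ(S)) = d for all u; i.e., the curvature radii at any pair of opposite points sum to the width. -/

import Mathlib

/-- For a closed strictly convex C² curve γ of constant Minkowski
width d in a normed plane, parametrized so that γ'(u) = ρ(u)·φ'(u) with φ the
double-sector-area parametrization of the unit circle S (with half-period lamS,
so that φ(u + lamS) = -φ(u)) and with opposite points satisfying
γ(u) − γ(u + lamS) = d·φ(u), the curvature radii at opposite points satisfy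
ρ(u) + ρ(u + lamS) = d for all u. -/
theorem stmt_17 {X : Type*} [NormedAddCommGroup X] [NormedSpace ℝ X]
    [StrictConvexSpace ℝ X] (hdim : Module.finrank ℝ X = 2)
    (lamS d : ℝ) (hlamS : 0 < lamS) (hd : 0 < d)
    (φ φd : ℝ → X) (γ : ℝ → X) (ρ : ℝ → ℝ)
    (hφ : ∀ u, ‖φ u‖ = 1) (hφd : ∀ u, HasDerivAt φ (φd u) u)
    (hφdne : ∀ u, φd u ≠ 0)
    (hanti : ∀ u, φ (u + lamS) = -φ u)
    (hρpos : ∀ u, 0 < ρ u)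
    (hγ : ∀ u, HasDerivAt γ (ρ u • φd u) u)
    (hwidth : ∀ u, γ u - γ (u + lamS) = d • φ u) :
    ∀ u, ρ u + ρ (u + lamS) = d := by
  intro u
  -- derivative of u ↦ φ (u + lamS) at u is φd (u + lamS)
  have hshiftφ : ∀ v : ℝ, HasDerivAt (fun w => φ (w + lamS)) (φd (v + lamS)) v := by
    intro v
    simpa [Function.comp_def] using HasDerivAt.scomp v (by simpa using hφd (v + lamS)) ((hasDerivAt_id v).add_const lamS)
  -- from anti-periodicity, φd (u + lamS) = - φd u
  have hantid : φd (u + lamS) = -φd u := by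
    have h1 : HasDerivAt (fun w => φ (w + lamS)) (-(φd u)) u := by
      have : (fun w => φ (w + lamS)) = fun w => -φ w := funext hanti
      rw [this]; exact (hφd u).neg
    exact (hshiftφ u).unique h1
  -- derivative of u ↦ γ (u + lamS) at u
  have hshiftγ : HasDerivAt (fun w => γ (w + lamS)) (ρ (u + lamS) • φd (u + lamS)) u := by
    simpa [Function.comp_def] using HasDerivAt.scomp u (by simpa using hγ (u + lamS)) ((hasDerivAt_id u).add_const lamS)
  -- differentiate the width relation
  have hL : HasDerivAt (fun w => γ w - γ (w + lamS))
      (ρ u • φd u - ρ (u + lamS) • φd (u + lamS)) u := (hγ u).sub hshiftγ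
  have hR : HasDerivAt (fun w => γ w - γ (w + lamS)) (d • φd u) u := by
    have : (fun w => γ w - γ (w + lamS)) = fun w => d • φ w := funext hwidth
    rw [this]; exact (hφd u).const_smul d
  have key : ρ u • φd u - ρ (u + lamS) • φd (u + lamS) = d • φd u := hL.unique hR
  rw [hantid] at key
  have : (ρ u + ρ (u + lamS) - d) • φd u = 0 := by
    rw [sub_smul, add_smul]
    rw [smul_neg, sub_neg_eq_add] at key
    rw [key]; abel
  have h0 := (smul_eq_zero.mp this).resolve_right (hφdne u)
  linarith [sub_eq_zero.mp (by exact_mod_cast h0)]
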